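/- Balancedness trace inequality for deep linear networks: let W_1, …, W_ℓ be matrices (W_i ∈ ℝ^{n_{i−1}×n_i}, n_ℓ = d) that are strongly balanced, i.e. W_iᵀW_i = W_{i+1}W_{i+1}ᵀ for all i ∈ [ℓ−1]. Then Tr(W_ℓᵀ ⋯ W_1ᵀ W_1 ⋯ W_ℓ) = Tr((W_ℓᵀW_ℓ)^ℓ) ≥ ‖W_ℓ‖_F^{2ℓ} / d^{ℓ−1}, and consequently, for any X ∈ ℝ^{d×m}, ‖W_1 ⋯ W_ℓ X‖_F ≥ √(λ_min(XXᵀ)) · ‖W_1‖_F^ℓ / d^{(ℓ−1)/2} (using that strong balancedness implies ‖W_i‖_F = ‖W_1‖_F for all i). -/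

import Mathlib

open Matrix

lemma aux_pow_mul {a b : Type*} [Fintype a] [Fintype b] [DecidableEq a] [DecidableEq b]
    (B : Matrix a b ℝ) (p : ℕ) :
    (B * Bᵀ) ^ p * B = B * (Bᵀ * B) ^ p := by
  induction p with
  | zero => simp
  | succ p ih =>
    rw [pow_succ, pow_succ, Matrix.mul_assoc, Matrix.mul_assoc B Bᵀ B,
      ← Matrix.mul_assoc ((B * Bᵀ) ^ p), ih, Matrix.mul_assoc]

lemma aux_conj_pow {a b : Type*} [Fintype a] [Fintype b] [DecidableEq a] [DecidableEq b]
    (B : Matrix a b ℝ) (p : ℕ) :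
    Bᵀ * ((B * Bᵀ) ^ p * B) = (Bᵀ * B) ^ (p + 1) := by
  rw [aux_pow_mul, pow_succ', ← Matrix.mul_assoc]

lemma trace_nonneg_of_psd {N : Type*} [Fintype N] [DecidableEq N]
    {M : Matrix N N ℝ} (hM : M.PosSemidef) : 0 ≤ M.trace := by
  obtain ⟨B, rfl⟩ : ∃ B : Matrix N N ℝ, M = Bᴴ * B := by
    open scoped MatrixOrder in exact CStarAlgebra.nonneg_iff_eq_star_mul_self.mp hM.nonneg
  rw [Matrix.trace]
  refine Finset.sum_nonneg fun i _ => ?_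
  simp only [Matrix.diag_apply, Matrix.mul_apply, Matrix.conjTranspose_apply, star_trivial]
  exact Finset.sum_nonneg fun j _ => mul_self_nonneg _

lemma trace_mul_nonneg_of_psd {N : Type*} [Fintype N] [DecidableEq N]
    {A B : Matrix N N ℝ} (hA : A.PosSemidef) (hB : B.PosSemidef) : 0 ≤ (A * B).trace := by
  obtain ⟨C, rfl⟩ : ∃ C : Matrix N N ℝ, A = Cᴴ * C := by
    open scoped MatrixOrder in exact CStarAlgebra.nonneg_iff_eq_star_mul_self.mp hA.nonneg
  rw [Matrix.mul_assoc, Matrix.trace_mul_comm]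
  exact trace_nonneg_of_psd (hB.mul_mul_conjTranspose_same C)

lemma conj_pow_unitary {N : Type*} [Fintype N] [DecidableEq N]
    (U D : Matrix N N ℝ) (hU : star U * U = 1) (k : ℕ) :
    (U * D * star U) ^ k = U * D ^ k * star U := by
  induction k with
  | zero => rw [pow_zero, pow_zero, Matrix.mul_one, mul_eq_one_comm.mp hU]
  | succ k ih =>
    rw [pow_succ, ih, pow_succ]
    simp only [Matrix.mul_assoc]
    rw [← Matrix.mul_assoc (star U) U, hU, Matrix.one_mul]

lemma trace_pow_hermitian {N : Type*} [Fintype N] [DecidableEq N]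
    {M : Matrix N N ℝ} (hM : M.IsHermitian) (k : ℕ) :
    (M ^ k).trace = ∑ i, hM.eigenvalues i ^ k := by
  have hU : star (hM.eigenvectorUnitary : Matrix N N ℝ) * (hM.eigenvectorUnitary : Matrix N N ℝ) = 1 :=
    Matrix.mem_unitaryGroup_iff'.mp hM.eigenvectorUnitary.2
  conv_lhs => rw [hM.spectral_theorem, Unitary.conjStarAlgAut_apply, conj_pow_unitary _ _ hU]
  rw [Matrix.trace_mul_comm, ← Matrix.mul_assoc, hU, Matrix.one_mul, Matrix.diagonal_pow,
    Matrix.trace_diagonal]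
  simp [RCLike.ofReal]

lemma sub_smul_one_psd {N : Type*} [Fintype N] [DecidableEq N]
    {M : Matrix N N ℝ} (hM : M.IsHermitian) {c : ℝ}
    (hc : ∀ i, c ≤ hM.eigenvalues i) : (M - c • 1).PosSemidef := by
  set U := (hM.eigenvectorUnitary : Matrix N N ℝ) with hUdef
  have hU : star U * U = 1 := Matrix.mem_unitaryGroup_iff'.mp hM.eigenvectorUnitary.2
  have hUU : U * star U = 1 := mul_eq_one_comm.mp hU
  have hdiag : Matrix.diagonal (fun i => hM.eigenvalues i - c)
      = Matrix.diagonal (RCLike.ofReal ∘ hM.eigenvalues) - c • (1 : Matrix N N ℝ) := by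
    ext i j
    by_cases h : i = j <;>
      simp [Matrix.diagonal_apply, h, Matrix.one_apply, RCLike.ofReal, Matrix.sub_apply]
  have key : U * Matrix.diagonal (fun i => hM.eigenvalues i - c) * star U = M - c • 1 := by
    rw [hdiag, Matrix.mul_sub, Matrix.sub_mul, Matrix.mul_smul, Matrix.mul_one,
      Matrix.smul_mul, hUU]
    exact (congrArg (· - c • (1 : Matrix N N ℝ)) hM.spectral_theorem).symm
  rw [← key]
  exact (Matrix.posSemidef_diagonal_iff.mpr fun i => sub_nonneg.mpr (hc i)).mul_mul_conjTranspose_same U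

lemma my_sqrt_pow {x : ℝ} (hx : 0 ≤ x) (p : ℕ) : Real.sqrt x ^ p = Real.sqrt (x ^ p) := by
  induction p with
  | zero => simp
  | succ p ih => rw [pow_succ, pow_succ, ih, ← Real.sqrt_mul (pow_nonneg hx p)]

/-- The product `W 0 * W 1 * ⋯ * W (k-1)` of a chain of rectangular matrices. -/
def matChainProd (n : ℕ → ℕ)
    (W : (i : ℕ) → Matrix (Fin (n i)) (Fin (n (i + 1))) ℝ) :
    (k : ℕ) → Matrix (Fin (n 0)) (Fin (n k)) ℝ
  | 0 => 1
  | k + 1 => matChainProd n W k * W k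

/-- Balancedness trace inequality for deep linear networks.  Here `W i` plays the role of
`W_{i+1}` in the paper (so `W (ℓ-1)` is the last layer `W_ℓ`), Frobenius norms are written
as `√(tr (AᵀA))`, and `lamin` is the smallest eigenvalue of `X * Xᵀ`. -/
theorem stmt_19 (ℓ d : ℕ) (hℓ : 0 < ℓ) (hd : 0 < d)
    (n : ℕ → ℕ) (hn : n ℓ = d)
    (W : (i : ℕ) → Matrix (Fin (n i)) (Fin (n (i + 1))) ℝ)
    (hbal : ∀ i, i + 1 < ℓ → (W i)ᵀ * W i = W (i + 1) * (W (i + 1))ᵀ)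
    {m : ℕ} (X : Matrix (Fin (n ℓ)) (Fin m) ℝ)
    (hX : (X * Xᵀ).IsHermitian)
    (lamin : ℝ) (hlam : lamin = ⨅ i, hX.eigenvalues i) :
    ((matChainProd n W ℓ)ᵀ * matChainProd n W ℓ).trace =
        (((W (ℓ - 1))ᵀ * W (ℓ - 1)) ^ ℓ).trace ∧
    (((W (ℓ - 1))ᵀ * W (ℓ - 1)).trace) ^ ℓ / (d : ℝ) ^ (ℓ - 1) ≤
        (((W (ℓ - 1))ᵀ * W (ℓ - 1)) ^ ℓ).trace ∧
    Real.sqrt lamin * (Real.sqrt (((W 0)ᵀ * W 0).trace)) ^ ℓ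
        / (d : ℝ) ^ (((ℓ : ℝ) - 1) / 2) ≤
      Real.sqrt (((matChainProd n W ℓ * X)ᵀ * (matChainProd n W ℓ * X)).trace) := by
  subst hn
  obtain ⟨k, rfl⟩ : ∃ k, ℓ = k + 1 := ⟨ℓ - 1, (Nat.succ_pred_eq_of_pos hℓ).symm⟩
  simp only [Nat.add_sub_cancel]
  -- the key structural identity
  have key : ∀ j, j + 1 ≤ k + 1 →
      (matChainProd n W (j + 1))ᵀ * matChainProd n W (j + 1) = ((W j)ᵀ * W j) ^ (j + 1) := by
    intro j
    induction j with
    | zero => intro _; simp [matChainProd]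
    | succ j ih =>
      intro hj
      have hb : (W j)ᵀ * W j = W (j + 1) * (W (j + 1))ᵀ := hbal j (by omega)
      show (matChainProd n W (j + 1) * W (j + 1))ᵀ * (matChainProd n W (j + 1) * W (j + 1)) = _
      rw [Matrix.transpose_mul, Matrix.mul_assoc, ← Matrix.mul_assoc ((matChainProd n W (j+1))ᵀ),
        ih (by omega), hb, aux_conj_pow]
  have part1 : ((matChainProd n W (k + 1))ᵀ * matChainProd n W (k + 1)).trace =
      (((W k)ᵀ * W k) ^ (k + 1)).trace := by
    rw [key k le_rfl]
  -- positive semidefiniteness facts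
  have hctW : ∀ {a b : ℕ} (A : Matrix (Fin a) (Fin b) ℝ), Aᴴ = Aᵀ := fun A =>
    Matrix.conjTranspose_eq_transpose_of_trivial A
  have hMpsd : (((W k)ᵀ * W k)).PosSemidef := by
    rw [← hctW]; exact Matrix.posSemidef_conjTranspose_mul_self (W k)
  have hMh : ((W k)ᵀ * W k).IsHermitian := hMpsd.1
  -- part 2 : power mean inequality
  have hcard : (Finset.univ : Finset (Fin (n (k + 1)))).card = n (k + 1) := by simp
  have part2 : (((W k)ᵀ * W k).trace) ^ (k + 1) / ((n (k + 1) : ℝ)) ^ k ≤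
      (((W k)ᵀ * W k) ^ (k + 1)).trace := by
    have htr1 : ((W k)ᵀ * W k).trace = ∑ i, hMh.eigenvalues i := by
      have := trace_pow_hermitian hMh 1
      simpa using this
    rw [htr1, trace_pow_hermitian hMh (k + 1)]
    have := pow_sum_div_card_le_sum_pow (s := (Finset.univ : Finset (Fin (n (k+1)))))
      (f := hMh.eigenvalues) (fun i _ => hMpsd.eigenvalues_nonneg i) k
    rwa [hcard] at this
  refine ⟨part1, part2, ?_⟩
  -- part 3
  set P := matChainProd n W (k + 1) with hP
  have hPpsd : (Pᵀ * P).PosSemidef := by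
    rw [← hctW]; exact Matrix.posSemidef_conjTranspose_mul_self P
  have hXpsd : (X * Xᵀ).PosSemidef := by
    rw [← hctW]; exact Matrix.posSemidef_self_mul_conjTranspose X
  have hlam_le : ∀ i, lamin ≤ hX.eigenvalues i := by
    intro i
    rw [hlam]
    exact ciInf_le (Set.finite_range _).bddBelow i
  have hlam0 : 0 ≤ lamin := by
    rw [hlam]
    exact Real.iInf_nonneg fun i => hXpsd.eigenvalues_nonneg i
  -- trace identity for the product with X
  have hRtr : ((P * X)ᵀ * (P * X)).trace = ((Pᵀ * P) * (X * Xᵀ)).trace := by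
    rw [Matrix.transpose_mul, Matrix.mul_assoc, Matrix.trace_mul_comm,
      ← Matrix.mul_assoc Pᵀ P X, Matrix.mul_assoc (Pᵀ * P) X Xᵀ]
  have hshift : 0 ≤ ((Pᵀ * P) * (X * Xᵀ - lamin • 1)).trace :=
    trace_mul_nonneg_of_psd hPpsd (sub_smul_one_psd hX hlam_le)
  have hexp : ((Pᵀ * P) * (X * Xᵀ - lamin • 1)).trace
      = ((Pᵀ * P) * (X * Xᵀ)).trace - lamin * (Pᵀ * P).trace := by
    rw [Matrix.mul_sub, Matrix.mul_smul, Matrix.mul_one, Matrix.trace_sub, Matrix.trace_smul]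
    simp
  have hlow : lamin * (Pᵀ * P).trace ≤ ((P * X)ᵀ * (P * X)).trace := by
    rw [hRtr]; linarith [hshift, hexp.symm.le, hexp.le]
  -- trace conservation along layers
  have hT0 : ∀ j, j ≤ k → ((W j)ᵀ * W j).trace = ((W 0)ᵀ * W 0).trace := by
    intro j
    induction j with
    | zero => intro _; rfl
    | succ j ih =>
      intro hj
      rw [← ih (by omega), Matrix.trace_mul_comm, ← hbal j (by omega)]
  set T := ((W 0)ᵀ * W 0).trace with hTdef
  have hT0nn : 0 ≤ T := by
    apply trace_nonneg_of_psd
    rw [← hctW]; exact Matrix.posSemidef_conjTranspose_mul_self (W 0)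
  have hnpos : (0 : ℝ) < (n (k + 1) : ℝ) := by exact_mod_cast hd
  -- chain of inequalities
  have hchain : lamin * (T ^ (k + 1) / (n (k + 1) : ℝ) ^ k) ≤ ((P * X)ᵀ * (P * X)).trace := by
    calc lamin * (T ^ (k + 1) / (n (k + 1) : ℝ) ^ k)
        ≤ lamin * (((W k)ᵀ * W k) ^ (k + 1)).trace := by
          apply mul_le_mul_of_nonneg_left _ hlam0
          rw [← hT0 k le_rfl] at *
          exact part2
      _ = lamin * (Pᵀ * P).trace := by rw [part1]
      _ ≤ _ := hlow
  have hsq := Real.sqrt_le_sqrt hchain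
  refine le_trans (le_of_eq ?_) hsq
  -- algebraic identification of the left-hand side
  have hexp2 : (((k : ℝ) + 1) - 1) / 2 = (k : ℝ) / 2 := by ring
  rw [show ((k : ℕ) + 1 : ℕ) = k + 1 from rfl]
  push_cast
  rw [hexp2, Real.rpow_div_two_eq_sqrt _ hnpos.le, Real.rpow_natCast,
    Real.sqrt_mul hlam0, Real.sqrt_div (pow_nonneg hT0nn _), my_sqrt_pow hT0nn,
    my_sqrt_pow hnpos.le]
  ring
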